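/- Let f and h be multivariate polynomials in n variables with coefficients in ℕ. Then the following are equivalent: (i) for every a : Fin n → ℕ with a i ≤ 1 for all i, f(a) = 0 if and only if h(a) = 0; (ii) Min(f) = Min(h). -/

import Mathlib

open MvPolynomial

/-- The support family `Sup(f)`: the sets of variables of monomials of `f`
with nonzero coefficient. -/
def supFamily {n : ℕ} (f : MvPolynomial (Fin n) ℕ) : Finset (Finset (Fin n)) :=
  f.support.image fun d => d.support

/-- `Min(f)`: the members of `Sup(f)` that are minimal with respect to inclusion. -/
def minFamily {n : ℕ} (f : MvPolynomial (Fin n) ℕ) : Finset (Finset (Fin n)) :=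
  (supFamily f).filter fun s => ∀ t ∈ supFamily f, t ⊆ s → t = s

lemma evalZero {n : ℕ} (f : MvPolynomial (Fin n) ℕ) (a : Fin n → ℕ) :
    eval a f = 0 ↔ ∀ s ∈ supFamily f, ¬ s ⊆ Finset.univ.filter (fun i => a i ≠ 0) := by
  rw [MvPolynomial.eval_eq, Finset.sum_eq_zero_iff]
  constructor
  · rintro H s hs hsub
    rw [supFamily, Finset.mem_image] at hs
    obtain ⟨d, hd, rfl⟩ := hs
    have hc : f.coeff d ≠ 0 := MvPolynomial.mem_support_iff.mp hd
    have := H d hd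
    rcases Nat.mul_eq_zero.mp this with h1 | h2
    · exact hc h1
    · obtain ⟨i, hi, hiz⟩ := Finset.prod_eq_zero_iff.mp h2
      have hdi : d i ≠ 0 := Finsupp.mem_support_iff.mp hi
      have : a i = 0 := by
        rcases pow_eq_zero_iff hdi |>.mp hiz with h'
        exact h'
      have := hsub hi
      simp at this
      exact this ‹a i = 0›
  · intro H d hd
    have hs : d.support ∈ supFamily f := Finset.mem_image_of_mem _ hd
    have := H _ hs
    rw [Finset.not_subset] at this
    obtain ⟨i, hi, hni⟩ := this
    have hai : a i = 0 := by simpa using hni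
    have : ∏ i ∈ d.support, a i ^ d i = 0 :=
      Finset.prod_eq_zero hi (by rw [hai]; exact zero_pow (Finsupp.mem_support_iff.mp hi))
    rw [this, mul_zero]

lemma exists_min {n : ℕ} (f : MvPolynomial (Fin n) ℕ) {s : Finset (Fin n)}
    (hs : s ∈ supFamily f) : ∃ t ∈ minFamily f, t ⊆ s := by
  obtain ⟨m, hm, hmin⟩ : ∃ m ∈ (supFamily f).filter (· ⊆ s),
      ∀ x ∈ (supFamily f).filter (· ⊆ s), ¬ x < m := by
    obtain ⟨m, hm⟩ := Finset.exists_minimal (s := (supFamily f).filter (· ⊆ s))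
      ⟨s, by simp [hs]⟩
    exact ⟨m, hm.1, fun x hx hlt => hm.not_lt hx hlt⟩
  rw [Finset.mem_filter] at hm
  refine ⟨m, ?_, hm.2⟩
  rw [minFamily, Finset.mem_filter]
  refine ⟨hm.1, fun t ht hts => ?_⟩
  by_contra hne
  exact hmin t (Finset.mem_filter.2 ⟨ht, hts.trans hm.2⟩) (lt_of_le_of_ne hts hne)

def ind {n : ℕ} (s : Finset (Fin n)) : Fin n → ℕ := fun i => if i ∈ s then 1 else 0

lemma ind_filter {n : ℕ} (s : Finset (Fin n)) :
    Finset.univ.filter (fun i => ind s i ≠ 0) = s := by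
  ext i; simp [ind]

lemma ind_le {n : ℕ} (s : Finset (Fin n)) : ∀ i, ind s i ≤ 1 := by
  intro i; unfold ind; split <;> simp

lemma eval_ind {n : ℕ} (f : MvPolynomial (Fin n) ℕ) (s : Finset (Fin n)) :
    eval (ind s) f = 0 ↔ ∀ t ∈ supFamily f, ¬ t ⊆ s := by
  rw [evalZero, ind_filter]

lemma min_sub {n : ℕ} {f h : MvPolynomial (Fin n) ℕ}
    (H : ∀ a : Fin n → ℕ, (∀ i, a i ≤ 1) → (eval a f = 0 ↔ eval a h = 0)) :
    minFamily f ⊆ minFamily h := by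
  intro s hsmin
  have hsmin' := Finset.mem_filter.mp hsmin
  have hssup : s ∈ supFamily f := hsmin'.1
  -- eval f at ind s is nonzero
  have hf : eval (ind s) f ≠ 0 := by
    rw [Ne, eval_ind]; push_neg; exact ⟨s, hssup, subset_refl s⟩
  have hh : eval (ind s) h ≠ 0 := fun h0 => hf ((H _ (ind_le s)).mpr h0)
  rw [Ne, eval_ind] at hh
  push_neg at hh
  obtain ⟨t, htsup, hts⟩ := hh
  obtain ⟨t', ht'min, ht't⟩ := exists_min h htsup
  have ht'sup : t' ∈ supFamily h := (Finset.mem_filter.mp ht'min).1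
  -- eval h at ind t' nonzero, hence eval f at ind t' nonzero
  have hh' : eval (ind t') h ≠ 0 := by
    rw [Ne, eval_ind]; push_neg; exact ⟨t', ht'sup, subset_refl t'⟩
  have hf' : eval (ind t') f ≠ 0 := fun h0 => hh' ((H _ (ind_le t')).mp h0)
  rw [Ne, eval_ind] at hf'
  push_neg at hf'
  obtain ⟨u, husup, hut'⟩ := hf'
  have hus : u ⊆ s := hut'.trans (ht't.trans hts)
  have : u = s := hsmin'.2 u husup hus
  subst this
  have : u = t' := subset_antisymm hut' (ht't.trans hts)
  subst this
  exact ht'min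

theorem stmt_3 {n : ℕ} (f h : MvPolynomial (Fin n) ℕ) :
    (∀ a : Fin n → ℕ, (∀ i, a i ≤ 1) → (eval a f = 0 ↔ eval a h = 0)) ↔
      minFamily f = minFamily h := by
  constructor
  · intro H
    exact subset_antisymm (min_sub H) (min_sub fun a ha => (H a ha).symm)
  · intro H a ha
    have key : ∀ g : MvPolynomial (Fin n) ℕ,
        (eval a g = 0 ↔ ∀ t ∈ minFamily g, ¬ t ⊆ Finset.univ.filter (fun i => a i ≠ 0)) := by
      intro g
      rw [evalZero]
      constructor
      · exact fun H' t ht => H' t (Finset.mem_filter.mp ht).1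
      · intro H' t ht hsub
        obtain ⟨t', ht'min, ht't⟩ := exists_min g ht
        exact H' t' ht'min (ht't.trans hsub)
    rw [key f, key h, H]
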